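/- If m/h is odd, then for every a ∈ F_q^*, the exponential sum Σ_{x ∈ F_q} (-1)^{Tr(a x^(2^h + 1))} equals 0. -/

import Mathlib

open Finset

/-- Balanced character sum for a nonzero additive map to `ZMod 2`. -/
lemma char_sum_zero (F : Type) [Fintype F] [AddGroup F]
    (L : F →+ ZMod 2) (b : F) (hb : L b ≠ 0) :
    ∑ x : F, (-1 : ℤ) ^ (L x).val = 0 := by
  have hb1 : L b = 1 := by
    have : ∀ v : ZMod 2, v ≠ 0 → v = 1 := by decide
    exact this _ hb
  have key : ∑ x : F, (-1 : ℤ) ^ (L (x + b)).val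
      = ∑ x : F, (-1 : ℤ) ^ (L x).val :=
    Fintype.sum_bijective (· + b) (Equiv.addRight b).bijective _ _ (fun x => rfl)
  have hflip : ∀ v : ZMod 2, ((-1 : ℤ)) ^ ((v + 1).val) = -(-1) ^ v.val := by decide
  have key2 : ∑ x : F, (-1 : ℤ) ^ (L x).val
      = -∑ x : F, (-1 : ℤ) ^ (L x).val := by
    conv_lhs => rw [← key]
    rw [← Finset.sum_neg_distrib]
    refine Finset.sum_congr rfl fun x _ => ?_
    rw [map_add, hb1, hflip]
  linarith

/-- coprimality of `2^h+1` and `2^m-1` when `m/h` is odd. -/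
lemma coprime_aux (m h : ℕ) (hh : 0 < h) (hdvd : h ∣ m) (hodd : Odd (m / h)) :
    Nat.Coprime (2 ^ m - 1) (2 ^ h + 1) := by
  obtain ⟨k, hk⟩ := hdvd
  have hk' : m / h = k := by rw [hk, Nat.mul_div_cancel_left _ hh]
  rw [hk'] at hodd
  have hkpos : 0 < k := hodd.pos
  have hm : 0 < m := hk ▸ Nat.mul_pos hh hkpos
  set d := Nat.gcd (2 ^ m - 1) (2 ^ h + 1) with hd
  have hd1 : d ∣ 2 ^ m - 1 := Nat.gcd_dvd_left _ _
  have hd2 : d ∣ 2 ^ h + 1 := Nat.gcd_dvd_right _ _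
  -- in ZMod d, 2^h = -1 and 2^m = 1
  have h2h : ((2 : ZMod d)) ^ h = -1 := by
    have : ((2 ^ h + 1 : ℕ) : ZMod d) = 0 := (ZMod.natCast_eq_zero_iff _ _).mpr hd2
    push_cast at this
    linear_combination this
  have h2m : ((2 : ZMod d)) ^ m = 1 := by
    have h1 : (1 : ℕ) ≤ 2 ^ m := Nat.one_le_two_pow
    have : ((2 ^ m - 1 : ℕ) : ZMod d) = 0 := (ZMod.natCast_eq_zero_iff _ _).mpr hd1
    rw [Nat.cast_sub h1] at this
    push_cast at this
    linear_combination this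
  have h22h : ((2 : ZMod d)) ^ (2 * h) = 1 := by
    rw [pow_mul']
    rw [h2h]; ring
  have ho1 : orderOf (2 : ZMod d) ∣ 2 * h := orderOf_dvd_of_pow_eq_one h22h
  have ho2 : orderOf (2 : ZMod d) ∣ m := orderOf_dvd_of_pow_eq_one h2m
  have hgcd : Nat.gcd (2 * h) m = h := by
    rw [hk, show 2 * h = h * 2 by ring, Nat.gcd_mul_left]
    have : Nat.gcd 2 k = 1 := Nat.coprime_two_left.mpr hodd
    rw [this, mul_one]
  have hoh : orderOf (2 : ZMod d) ∣ h := by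
    rw [← hgcd]; exact Nat.dvd_gcd ho1 ho2
  have h2h1 : ((2 : ZMod d)) ^ h = 1 := orderOf_dvd_iff_pow_eq_one.mp hoh
  have hcd : ((2 : ℕ) : ZMod d) = 0 := by
    have h1 : (-1 : ZMod d) = 1 := by rw [← h2h, h2h1]
    push_cast
    linear_combination -h1
  have hdvd2 : d ∣ 2 := (ZMod.natCast_eq_zero_iff _ _).mp hcd
  have hdodd : ¬ (2 ∣ d) := by
    intro h2d
    have : (2 : ℕ) ∣ 2 ^ m - 1 := h2d.trans hd1
    have he : 2 ∣ 2 ^ m := dvd_pow_self 2 hm.ne'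
    have h1 : (1 : ℕ) ≤ 2 ^ m := Nat.one_le_two_pow
    omega
  have hd1' : d = 1 := by
    rcases (Nat.dvd_prime Nat.prime_two).mp hdvd2 with h1 | h2
    · exact h1
    · exact absurd (h2 ▸ dvd_refl d) (h2 ▸ hdodd)
  exact hd1' 

/-- If `m/h` is odd, then `∑_{x ∈ F_q} (-1)^{Tr(a x^(2^h+1))} = 0` for every `a ≠ 0`. -/
theorem stmt4 (m h : ℕ) (hh : 0 < h) (hdvd : h ∣ m) (hne : h ≠ m) (hodd : Odd (m / h))
    (F : Type) [Field F] [Fintype F] [Algebra (ZMod 2) F]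
    (hcard : Fintype.card F = 2 ^ m) :
    ∀ a : F, a ≠ 0 →
      ∑ x : F, (-1 : ℤ) ^ (Algebra.trace (ZMod 2) F (a * x ^ (2 ^ h + 1))).val = 0 := by
  classical
  intro a ha
  set n := 2 ^ h + 1 with hn
  have hnpos : 0 < n := by positivity
  -- the power map is bijective
  have hcou : (Nat.card Fˣ).Coprime n := by
    rw [Nat.card_eq_fintype_card, Fintype.card_units, hcard]
    exact coprime_aux m h hh hdvd hodd
  have hu : Function.Bijective (fun u : Fˣ => u ^ n) := hcou.pow_left_bijective
  have hinj : Function.Injective (fun x : F => x ^ n) := by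
    intro x y hxy
    simp only at hxy
    rcases eq_or_ne x 0 with rfl | hx
    · rcases eq_or_ne y 0 with rfl | hy
      · rfl
      · rw [zero_pow hnpos.ne'] at hxy
        exact absurd ((pow_eq_zero_iff hnpos.ne').mp hxy.symm) hy
    · rcases eq_or_ne y 0 with rfl | hy
      · rw [zero_pow hnpos.ne'] at hxy
        exact absurd ((pow_eq_zero_iff hnpos.ne').mp hxy) hx
      · have := hu.injective (a₁ := Units.mk0 x hx) (a₂ := Units.mk0 y hy) (by
          ext; push_cast; exact hxy)
        simpa [Units.ext_iff] using this
  have hbij : Function.Bijective (fun x : F => x ^ n) :=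
    Finite.injective_iff_bijective.mp hinj
  -- reindex the sum
  have hre : ∑ x : F, (-1 : ℤ) ^ (Algebra.trace (ZMod 2) F (a * x ^ n)).val
      = ∑ x : F, (-1 : ℤ) ^ (Algebra.trace (ZMod 2) F (a * x)).val :=
    Fintype.sum_bijective _ hbij _ _ (fun x => rfl)
  rw [hre]
  -- nondegeneracy of trace
  haveI : Fact (Nat.Prime 2) := ⟨Nat.prime_two⟩
  haveI : Module.Finite (ZMod 2) F := Module.finite_iff_finite.mpr inferInstance
  have hnd := (traceForm_nondegenerate (ZMod 2) F).1 a
  simp_rw [Algebra.traceForm_apply] at hnd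
  have hb : ∃ b : F, Algebra.trace (ZMod 2) F (a * b) ≠ 0 := by
    by_contra hf
    push_neg at hf
    exact ha (hnd hf)
  obtain ⟨b, hb⟩ := hb
  -- conclude by the balanced character sum
  let L : F →+ ZMod 2 :=
    ((Algebra.trace (ZMod 2) F).comp (LinearMap.mulLeft (ZMod 2) a)).toAddMonoidHom
  have : ∀ x : F, L x = Algebra.trace (ZMod 2) F (a * x) := fun x => rfl
  have := char_sum_zero F L b (by rw [this b]; exact hb)
  exact this
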